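/- arXiv:2604.21947 — 3 statements merged into one kernel-verified Lean document; each statement's English description precedes it below -/
import Mathlib

section
/- With C(z) := lim_{k→∞} [ Σ_{j=1}^{k} ln(z+j) − (z + k + 1/2)·ln(z+k) + (z+k) ], the function Γ̃(z+1) := exp(C(0) − C(z)) equals the classical Gamma function: Γ̃(z+1) = Γ(z+1) for all z ∈ ℂ with z ∉ ℤ_{<0}. -/
open Filter Real

/-- The Cesàro/Stirling sequence whose limit defines `C(z)`. -/
noncomputable def stirlingSeq' (z : ℂ) (k : ℕ) : ℂ :=
  (∑ j ∈ Finset.Icc 1 k, Complex.log (z + j)) -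
    (z + k + 1 / 2) * Complex.log (z + k) + (z + k)

lemma aux_inv_tendsto : Tendsto (fun k : ℕ => ((k : ℂ))⁻¹) atTop (nhds 0) := by
  have h := tendsto_inv_atTop_nhds_zero_nat (𝕜 := ℝ)
  have h2 := (Complex.continuous_ofReal.tendsto 0).comp h
  simpa [Function.comp_def] using h2

lemma aux_div_tendsto (z : ℂ) : Tendsto (fun k : ℕ => z / (k : ℂ)) atTop (nhds 0) := by
  have := aux_inv_tendsto.const_mul z
  simpa [div_eq_mul_inv] using this

lemma aux_k_log (z : ℂ) (hz : z ≠ 0) :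
    Tendsto (fun k : ℕ => (k : ℂ) * Complex.log (1 + z / k)) atTop (nhds z) := by
  have hd : HasDerivAt (fun w : ℂ => Complex.log (1 + w)) 1 0 := by
    have h1 : HasDerivAt (fun w : ℂ => 1 + w) 1 0 := by
      simpa using (hasDerivAt_id (0:ℂ)).const_add 1
    have h2 : HasDerivAt Complex.log 1 (1 + 0) := by
      simpa using Complex.hasDerivAt_log
        (by simp [Complex.slitPlane] : (1:ℂ) + 0 ∈ Complex.slitPlane)
    simpa [Function.comp_def] using h2.comp 0 h1
  have hslope := hasDerivAt_iff_tendsto_slope.mp hd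
  have hu : Tendsto (fun k : ℕ => z / (k : ℂ)) atTop (nhdsWithin 0 {0}ᶜ) := by
    apply tendsto_nhdsWithin_of_tendsto_nhds_of_eventually_within _ (aux_div_tendsto z)
    filter_upwards [eventually_ge_atTop 1] with k hk
    simp only [Set.mem_compl_iff, Set.mem_singleton_iff]
    exact div_ne_zero hz (Nat.cast_ne_zero.mpr (by omega))
  have hcomp := hslope.comp hu
  have hmul := hcomp.const_mul z
  rw [mul_one] at hmul
  refine hmul.congr' ?_
  filter_upwards [eventually_ge_atTop 1] with k hk
  have hk0 : (k : ℂ) ≠ 0 := Nat.cast_ne_zero.mpr (by omega)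
  simp only [Function.comp, slope_def_field]
  rw [add_zero, Complex.log_one, sub_zero, sub_zero]
  field_simp

lemma aux_log_eq (z : ℂ) {k : ℕ} (hk : 1 ≤ k) (hne : 1 + z / k ≠ 0) :
    Complex.log (z + k) - Complex.log k = Complex.log (1 + z / k) := by
  have hk0 : (k : ℂ) ≠ 0 := Nat.cast_ne_zero.mpr (by omega)
  have hkR : (0 : ℝ) < (k : ℝ) := by exact_mod_cast Nat.pos_of_ne_zero (by omega)
  have h1 : z + k = ((k : ℝ) : ℂ) * (1 + z / k) := by
    push_cast
    field_simp
    ring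
  rw [h1, Complex.log_ofReal_mul hkR hne]
  have h2 : Complex.log (k : ℂ) = ((Real.log k : ℝ) : ℂ) := by
    rw [Complex.natCast_log]
  rw [h2]
  ring

lemma aux_E_tendsto (z : ℂ) (hz0 : z ≠ 0) :
    Tendsto (fun k : ℕ => ((z + k + 1) / k) *
      Complex.exp ((z + k + 1 / 2) * (Complex.log (z + k) - Complex.log k) - z))
      atTop (nhds 1) := by
  have hne : ∀ᶠ k : ℕ in atTop, 1 + z / k ≠ 0 := by
    have hlt : ∀ᶠ k : ℕ in atTop, ‖z / (k : ℂ)‖ < 1 :=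
      ((aux_div_tendsto z).norm.congr (fun k => rfl)).eventually_lt_const (by norm_num)
    filter_upwards [hlt] with k hk h0
    have : z / k = -1 := by linear_combination h0
    rw [this] at hk
    simp at hk
  have h1 : Tendsto (fun k : ℕ => (z + k + 1) / (k : ℂ)) atTop (nhds 1) := by
    have hb : Tendsto (fun k : ℕ => (z + 1) / (k : ℂ) + 1) atTop (nhds 1) := by
      simpa using (aux_div_tendsto (z + 1)).add_const 1
    refine hb.congr' ?_
    filter_upwards [eventually_ge_atTop 1] with k hk
    have hk0 : (k : ℂ) ≠ 0 := Nat.cast_ne_zero.mpr (by omega)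
    field_simp
    ring
  have hlog1 : Tendsto (fun k : ℕ => Complex.log (1 + z / k)) atTop (nhds 0) := by
    have hc : ContinuousAt Complex.log 1 :=
      continuousAt_clog (by simp [Complex.slitPlane])
    have ht : Tendsto (fun k : ℕ => 1 + z / (k : ℂ)) atTop (nhds 1) := by
      simpa using tendsto_const_nhds.add (aux_div_tendsto z)
    simpa [Complex.log_one, Function.comp_def] using hc.tendsto.comp ht
  have h2 : Tendsto (fun k : ℕ =>
      (z + k + 1 / 2) * (Complex.log (z + k) - Complex.log k) - z) atTop (nhds 0) := by
    have ha : Tendsto (fun k : ℕ => (z + 1 / 2) * Complex.log (1 + z / k)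
        + (k : ℂ) * Complex.log (1 + z / k) - z) atTop (nhds 0) := by
      have := ((hlog1.const_mul (z + 1 / 2)).add (aux_k_log z hz0)).sub_const z
      simpa using this
    refine ha.congr' ?_
    filter_upwards [eventually_ge_atTop 1, hne] with k hk hkne
    rw [aux_log_eq z hk hkne]
    ring
  have := h1.mul h2.cexp
  simpa using this

lemma aux_identity (z : ℂ) (hz' : ∀ j : ℕ, 1 ≤ j → z + j ≠ 0) (k : ℕ) (hk : 1 ≤ k) :
    Complex.exp (stirlingSeq' 0 k - stirlingSeq' z k)
      = Complex.GammaSeq (z + 1) k * (((z + k + 1) / k) *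
        Complex.exp ((z + k + 1 / 2) * (Complex.log (z + k) - Complex.log k) - z)) := by
  have hk0 : (k : ℂ) ≠ 0 := Nat.cast_ne_zero.mpr (by omega)
  set P : ℂ := ∏ j ∈ Finset.Icc 1 k, (z + (j : ℂ)) with hPdef
  have hP : P ≠ 0 :=
    Finset.prod_ne_zero_iff.mpr fun j hj => hz' j (Finset.mem_Icc.mp hj).1
  have hzk1 : z + (k : ℂ) + 1 ≠ 0 := by
    have := hz' (k + 1) (by omega)
    push_cast at this
    intro h
    exact this (by linear_combination h)
  -- LHS computation
  have hsum : stirlingSeq' 0 k - stirlingSeq' z k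
      = (∑ j ∈ Finset.Icc 1 k, (Complex.log j - Complex.log (z + j)))
        + ((z + k + 1 / 2) * Complex.log (z + k)
            - ((k : ℂ) + 1 / 2) * Complex.log k - z) := by
    simp only [stirlingSeq', zero_add]
    rw [Finset.sum_sub_distrib]
    ring
  have hfac : (∏ j ∈ Finset.Icc 1 k, (j : ℂ)) = ((k.factorial : ℕ) : ℂ) := by
    rw [← Nat.cast_prod]
    congr 1
    rw [← Finset.Ico_add_one_right_eq_Icc, Finset.prod_Ico_eq_prod_range]
    simpa [add_comm] using Finset.prod_range_add_one_eq_factorial k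
  have hLHS : Complex.exp (stirlingSeq' 0 k - stirlingSeq' z k)
      = ((k.factorial : ℕ) : ℂ) / P * Complex.exp ((z + k + 1 / 2) * Complex.log (z + k)
            - ((k : ℂ) + 1 / 2) * Complex.log k - z) := by
    rw [hsum, Complex.exp_add, Complex.exp_sum]
    congr 1
    have hterm : ∀ j ∈ Finset.Icc 1 k,
        Complex.exp (Complex.log j - Complex.log (z + j)) = (j : ℂ) / (z + j) := by
      intro j hj
      have hj1 := (Finset.mem_Icc.mp hj).1
      have hj0 : (j : ℂ) ≠ 0 := Nat.cast_ne_zero.mpr (by omega)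
      rw [Complex.exp_sub, Complex.exp_log hj0, Complex.exp_log (hz' j hj1)]
    rw [Finset.prod_congr rfl hterm, Finset.prod_div_distrib, hfac]
  -- product over range(k+1)
  have hprod : (∏ j ∈ Finset.range (k + 1), (z + 1 + (j : ℂ))) = P * (z + k + 1) := by
    rw [Finset.prod_range_succ]
    congr 1
    · rw [hPdef, ← Finset.Ico_add_one_right_eq_Icc, Finset.prod_Ico_eq_prod_range]
      refine Finset.prod_congr (by simp) fun j _ => ?_
      push_cast
      ring
    · push_cast
      ring_nf
  have hGamma : Complex.GammaSeq (z + 1) k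
      = Complex.exp (Complex.log k * (z + 1)) * ((k.factorial : ℕ) : ℂ) / (P * (z + k + 1)) := by
    rw [Complex.GammaSeq, Complex.cpow_def_of_ne_zero hk0, hprod]
  rw [hLHS, hGamma]
  have hX : Complex.exp ((z + k + 1 / 2) * Complex.log (z + k)
        - ((k : ℂ) + 1 / 2) * Complex.log k - z)
      = Complex.exp (Complex.log k * (z + 1))
        * Complex.exp ((z + k + 1 / 2) * (Complex.log (z + k) - Complex.log k) - z)
        / Complex.exp (Complex.log k) := by
    rw [← Complex.exp_add, ← Complex.exp_sub]
    congr 1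
    ring
  have hek : Complex.exp (Complex.log k) = (k : ℂ) := Complex.exp_log hk0
  rw [hek] at hX
  rw [hX]
  field_simp

theorem stmt_12 (z : ℂ) (hz : ∀ n : ℕ, z ≠ -((n : ℂ) + 1))
    (Cz C0 : ℂ)
    (hCz : Tendsto (stirlingSeq' z) atTop (nhds Cz))
    (hC0 : Tendsto (stirlingSeq' 0) atTop (nhds C0)) :
    Complex.exp (C0 - Cz) = Complex.Gamma (z + 1) := by
  by_cases hz0 : z = 0
  · subst hz0
    have : Cz = C0 := tendsto_nhds_unique hCz hC0
    rw [this, sub_self, Complex.exp_zero, zero_add, Complex.Gamma_one]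
  · have hz' : ∀ j : ℕ, 1 ≤ j → z + (j : ℂ) ≠ 0 := by
      intro j hj h
      obtain ⟨m, rfl⟩ := Nat.exists_eq_add_of_le hj
      refine hz m ?_
      push_cast at h ⊢
      linear_combination h
    have hlim1 : Tendsto (fun k => Complex.exp (stirlingSeq' 0 k - stirlingSeq' z k))
        atTop (nhds (Complex.exp (C0 - Cz))) := (hC0.sub hCz).cexp
    have hlim2 : Tendsto (fun k => Complex.exp (stirlingSeq' 0 k - stirlingSeq' z k))
        atTop (nhds (Complex.Gamma (z + 1))) := by
      have hmul := (Complex.GammaSeq_tendsto_Gamma (z + 1)).mul (aux_E_tendsto z hz0)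
      rw [mul_one] at hmul
      refine hmul.congr' ?_
      filter_upwards [eventually_ge_atTop 1] with k hk
      exact (aux_identity z hz' k hk).symm
    exact tendsto_nhds_unique hlim1 hlim2
end

section
/- For all z in the open unit disc of ℂ, ln Γ(z+1) = −γ·z + Σ_{n=2}^{∞} ((−1)^n/n)·ζ(n)·z^n, where the series converges for |z| < 1. -/
open Complex Filter Finset Topology

lemma taylor_step {w : ℂ} (hw : ‖w‖ < 1) :
    HasSum (fun n : ℕ => ((-1) ^ (n + 2) / ((n : ℂ) + 2)) * w ^ (n + 2))
      (w - Complex.log (1 + w)) := by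
  have h := Complex.hasSum_taylorSeries_log hw
  have h3 := ((hasSum_nat_add_iff' (f := fun n : ℕ => (-1) ^ (n + 1) * w ^ n / n) 2).mpr h).neg
  have hv : -(Complex.log (1 + w) - ∑ i ∈ range 2, (-1) ^ (i + 1) * w ^ i / (i : ℂ)) =
      w - Complex.log (1 + w) := by
    simp [Finset.sum_range_succ]
  rw [hv] at h3
  exact h3.congr_fun fun n => by push_cast; ring

lemma zeta_step (n : ℕ) :
    HasSum (fun k : ℕ => (1 : ℂ) / ((k : ℂ) + 1) ^ (n + 2)) (riemannZeta ((n : ℂ) + 2)) := by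
  have hs : 1 < ((n : ℂ) + 2).re := by
    have : (0:ℝ) ≤ n := n.cast_nonneg
    simp only [Complex.add_re, Complex.natCast_re, Complex.re_ofNat]
    linarith
  have h2 : Summable (fun k : ℕ => (1 : ℂ) / ((k : ℂ) + 1) ^ ((n : ℂ) + 2)) := by
    have := (summable_nat_add_iff 1).mpr
      ((Complex.summable_one_div_nat_cpow (p := (n : ℂ) + 2)).mpr hs)
    refine this.congr fun k => by push_cast; ring_nf
  have key : ∀ k : ℕ, (1 : ℂ) / ((k : ℂ) + 1) ^ (n + 2) = 1 / ((k : ℂ) + 1) ^ ((n : ℂ) + 2) := by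
    intro k
    rw [show ((n : ℂ) + 2) = ((n + 2 : ℕ) : ℂ) by push_cast; ring, Complex.cpow_natCast]
  rw [zeta_eq_tsum_one_div_nat_add_one_cpow hs]
  exact h2.hasSum.congr_fun key

lemma g_summable {z : ℂ} (hz : ‖z‖ < 1) :
    Summable (fun p : ℕ × ℕ =>
      ((-1) ^ (p.1 + 2) / ((p.1 : ℂ) + 2)) * (z / ((p.2 : ℂ) + 1)) ^ (p.1 + 2)) := by
  have hmaj : Summable (fun p : ℕ × ℕ => ‖z‖ ^ (p.1 + 2) * (1 / ((p.2 : ℝ) + 1) ^ 2)) := by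
    refine Summable.mul_of_nonneg (f := fun n : ℕ => ‖z‖ ^ (n + 2))
      (g := fun k : ℕ => 1 / ((k : ℝ) + 1) ^ 2) ?_ ?_ (fun n => by positivity)
      (fun k => by positivity)
    · exact ((summable_geometric_of_lt_one (norm_nonneg z) hz).mul_left (‖z‖ ^ 2)).congr
        fun n => by rw [pow_add]; ring
    · have := (summable_nat_add_iff 1).mpr ((Real.summable_one_div_nat_pow (p := 2)).mpr
        one_lt_two)
      exact this.congr fun k => by push_cast; ring_nf
  refine Summable.of_norm_bounded hmaj fun p => ?_
  obtain ⟨n, k⟩ := p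
  have hk1 : (1:ℝ) ≤ (k : ℝ) + 1 := by
    have := Nat.cast_nonneg (α := ℝ) k; linarith
  have hnk : ‖((k : ℂ) + 1)‖ = (k : ℝ) + 1 := by
    rw [show ((k : ℂ) + 1) = (((k : ℝ) + 1 : ℝ) : ℂ) by push_cast; ring,
      Complex.norm_real, Real.norm_of_nonneg (by positivity)]
  have hn2 : ‖((n : ℂ) + 2)‖ = (n : ℝ) + 2 := by
    rw [show ((n : ℂ) + 2) = (((n : ℝ) + 2 : ℝ) : ℂ) by push_cast; ring,
      Complex.norm_real, Real.norm_of_nonneg (by positivity)]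
  have h1 : ‖((-1 : ℂ)) ^ (n + 2) / ((n : ℂ) + 2)‖ ≤ 1 := by
    rw [norm_div, norm_pow, norm_neg, norm_one, one_pow, hn2, div_le_one (by positivity)]
    linarith [Nat.cast_nonneg (α := ℝ) n]
  calc ‖((-1) ^ (n + 2) / ((n : ℂ) + 2)) * (z / ((k : ℂ) + 1)) ^ (n + 2)‖
      ≤ 1 * ‖(z / ((k : ℂ) + 1)) ^ (n + 2)‖ := by
        rw [norm_mul]; exact mul_le_mul_of_nonneg_right h1 (norm_nonneg _)
    _ ≤ ‖z‖ ^ (n + 2) * (1 / ((k : ℝ) + 1) ^ 2) := by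
        rw [one_mul, norm_pow, norm_div, hnk, div_pow, mul_one_div]
        apply div_le_div_of_nonneg_left (by positivity) (by positivity)
        exact pow_le_pow_right₀ hk1 (by omega)

lemma key_alg {z : ℂ} (hz : ‖z‖ < 1) {N : ℕ} (hN : 1 ≤ N) :
    Complex.exp (-(Real.eulerMascheroniConstant : ℂ) * z +
        ∑ k ∈ range N, (z / ((k : ℂ) + 1) - Complex.log (1 + z / ((k : ℂ) + 1)))) =
      Complex.GammaSeq (z + 1) N *
        (Complex.exp (z * (((harmonic N : ℚ) : ℂ) - Complex.log (N : ℂ) -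
            (Real.eulerMascheroniConstant : ℂ))) * ((z + 1 + N) / N)) := by
  set γc : ℂ := (Real.eulerMascheroniConstant : ℂ)
  have hNne : ((N : ℂ)) ≠ 0 := Nat.cast_ne_zero.mpr (by omega)
  have hwlt : ∀ k : ℕ, ‖z / ((k : ℂ) + 1)‖ < 1 := by
    intro k
    have h1 : (1:ℝ) ≤ ‖((k : ℂ) + 1)‖ := by
      rw [show ((k : ℂ) + 1) = (((k : ℝ) + 1 : ℝ) : ℂ) by push_cast; ring, Complex.norm_real,
        Real.norm_of_nonneg (by positivity)]
      have := Nat.cast_nonneg (α := ℝ) k; linarith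
    rw [norm_div]
    calc ‖z‖ / ‖((k : ℂ) + 1)‖ ≤ ‖z‖ / 1 := by
          apply div_le_div_of_nonneg_left (norm_nonneg z) one_pos h1 |>.trans le_rfl
      _ < 1 := by simpa using hz
  have h1w : ∀ k : ℕ, (1 + z / ((k : ℂ) + 1)) ≠ 0 := by
    intro k h
    have := hwlt k
    rw [show z / ((k : ℂ) + 1) = -1 from by linear_combination h, norm_neg, norm_one] at this
    exact lt_irrefl 1 this
  have hkne : ∀ k : ℕ, ((k : ℂ) + 1) ≠ 0 := by
    intro k h
    have := congrArg Complex.re h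
    simp at this
    have := Nat.cast_nonneg (α := ℝ) k
    linarith
  have hPj : ∀ j : ℕ, (z + 1 + (j : ℂ)) ≠ 0 := by
    intro j h
    have h2 := congrArg Complex.re h
    simp only [Complex.add_re, Complex.one_re, Complex.natCast_re, Complex.zero_re] at h2
    have h3 : |z.re| ≤ ‖z‖ := Complex.abs_re_le_norm z
    have := Nat.cast_nonneg (α := ℝ) j
    have := abs_le.mp h3
    linarith
  have hPne : (∏ j ∈ range N, (z + 1 + (j : ℂ))) ≠ 0 :=
    Finset.prod_ne_zero_iff.mpr fun j _ => hPj j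
  -- sum splits
  have hsum : ∑ k ∈ range N, (z / ((k : ℂ) + 1) - Complex.log (1 + z / ((k : ℂ) + 1))) =
      z * ((harmonic N : ℚ) : ℂ) - ∑ k ∈ range N, Complex.log (1 + z / ((k : ℂ) + 1)) := by
    rw [Finset.sum_sub_distrib]
    congr 1
    rw [harmonic]
    push_cast
    rw [Finset.mul_sum]
    exact Finset.sum_congr rfl fun k _ => by rw [div_eq_mul_inv]
  have hexplog : Complex.exp (∑ k ∈ range N, Complex.log (1 + z / ((k : ℂ) + 1))) =
      ∏ k ∈ range N, (1 + z / ((k : ℂ) + 1)) := by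
    rw [Complex.exp_sum]
    exact Finset.prod_congr rfl fun k _ => Complex.exp_log (h1w k)
  have hprod : (∏ k ∈ range N, (1 + z / ((k : ℂ) + 1))) =
      (∏ j ∈ range N, (z + 1 + (j : ℂ))) / (Nat.factorial N : ℂ) := by
    have : ∀ k ∈ range N, (1 + z / ((k : ℂ) + 1)) = (z + 1 + (k : ℂ)) / ((k : ℂ) + 1) := by
      intro k _
      field_simp [hkne k]
      ring
    rw [Finset.prod_congr rfl this, Finset.prod_div_distrib]
    congr 1
    rw [← Finset.prod_range_add_one_eq_factorial N, Nat.cast_prod]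
    exact Finset.prod_congr rfl fun x _ => by push_cast; ring
  have hfacne : ((Nat.factorial N : ℂ)) ≠ 0 := Nat.cast_ne_zero.mpr (Nat.factorial_ne_zero N)
  have hGS : Complex.GammaSeq (z + 1) N =
      (N : ℂ) ^ ((z : ℂ) + 1) * (Nat.factorial N : ℂ) /
        ((∏ j ∈ range N, (z + 1 + (j : ℂ))) * (z + 1 + N)) := by
    rw [Complex.GammaSeq, Finset.prod_range_succ]
  have hcpow : (N : ℂ) ^ ((z : ℂ) + 1) = Complex.exp (z * Complex.log (N : ℂ)) * (N : ℂ) := by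
    rw [Complex.cpow_def_of_ne_zero hNne, mul_add, mul_one, mul_comm, Complex.exp_add,
      Complex.exp_log hNne]
  rw [hsum, hGS, hcpow,
    show -γc * z + (z * ((harmonic N : ℚ) : ℂ) -
        ∑ k ∈ range N, Complex.log (1 + z / ((k : ℂ) + 1))) =
      (z * ((harmonic N : ℚ) : ℂ) - z * γc) -
        ∑ k ∈ range N, Complex.log (1 + z / ((k : ℂ) + 1)) from by ring,
    Complex.exp_sub, Complex.exp_sub, hexplog, hprod,
    show z * (((harmonic N : ℚ) : ℂ) - Complex.log (N : ℂ) - γc) =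
      z * ((harmonic N : ℚ) : ℂ) - z * Complex.log (N : ℂ) - z * γc from by ring,
    Complex.exp_sub, Complex.exp_sub]
  have hA := hPj N
  field_simp

lemma lim_part (z : ℂ) :
    Tendsto (fun N : ℕ => Complex.exp (z * (((harmonic N : ℚ) : ℂ) - Complex.log (N : ℂ) -
        (Real.eulerMascheroniConstant : ℂ))) * ((z + 1 + N) / N)) atTop (𝓝 1) := by
  have hr : Tendsto (fun n : ℕ => ((harmonic n : ℝ) - Real.log n -
      Real.eulerMascheroniConstant)) atTop (𝓝 0) := by
    have := Real.tendsto_harmonic_sub_log.sub_const Real.eulerMascheroniConstant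
    rwa [sub_self] at this
  have hc : Tendsto (fun n : ℕ => (((harmonic n : ℚ) : ℂ) - Complex.log (n : ℂ) -
      (Real.eulerMascheroniConstant : ℂ))) atTop (𝓝 0) := by
    have := (Complex.continuous_ofReal.tendsto 0).comp hr
    rw [Complex.ofReal_zero] at this
    refine this.congr fun n => ?_
    simp only [Function.comp_apply]
    push_cast [← Complex.natCast_log]
    ring
  have hE : Tendsto (fun N : ℕ => Complex.exp (z * (((harmonic N : ℚ) : ℂ) -
      Complex.log (N : ℂ) - (Real.eulerMascheroniConstant : ℂ)))) atTop (𝓝 1) := by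
    have h2 := hc.const_mul z
    rw [mul_zero] at h2
    have := (Complex.continuous_exp.tendsto 0).comp h2
    rwa [Complex.exp_zero] at this
  have hinv : Tendsto (fun N : ℕ => ((N : ℂ))⁻¹) atTop (𝓝 0) := by
    rw [tendsto_zero_iff_norm_tendsto_zero]
    have : Tendsto (fun N : ℕ => ((N : ℝ))⁻¹) atTop (𝓝 0) :=
      tendsto_inv_atTop_zero.comp tendsto_natCast_atTop_atTop
    refine this.congr fun N => by rw [norm_inv, Complex.norm_natCast]
  have hQ : Tendsto (fun N : ℕ => (z + 1 + N) / N) atTop (𝓝 1) := by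
    have h2 := (hinv.const_mul (z + 1)).add (tendsto_const_nhds (x := (1 : ℂ)))
    rw [mul_zero, zero_add] at h2
    refine h2.congr' ?_
    filter_upwards [eventually_ge_atTop 1] with N hN
    have hNne : ((N : ℂ)) ≠ 0 := Nat.cast_ne_zero.mpr (by omega)
    field_simp
  simpa using hE.mul hQ

set_option maxHeartbeats 1000000 in
theorem stmt_14 (z : ℂ) (hz : ‖z‖ < 1) :
    ∃ L : ℂ,
      HasSum (fun n : ℕ =>
        ((-1) ^ (n + 2) / ((n : ℂ) + 2)) * riemannZeta ((n : ℂ) + 2) * z ^ (n + 2)) L ∧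
      Complex.exp (-(Real.eulerMascheroniConstant : ℂ) * z + L) = Complex.Gamma (z + 1) := by
  have hG := g_summable hz
  have hGs := hG.hasSum
  set S : ℂ := ∑' p : ℕ × ℕ,
    ((-1) ^ (p.1 + 2) / ((p.1 : ℂ) + 2)) * (z / ((p.2 : ℂ) + 1)) ^ (p.1 + 2) with hSdef
  have hwlt : ∀ k : ℕ, ‖z / ((k : ℂ) + 1)‖ < 1 := by
    intro k
    have h1 : (1:ℝ) ≤ ‖((k : ℂ) + 1)‖ := by
      rw [show ((k : ℂ) + 1) = (((k : ℝ) + 1 : ℝ) : ℂ) by push_cast; ring, Complex.norm_real,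
        Real.norm_of_nonneg (by positivity)]
      have := Nat.cast_nonneg (α := ℝ) k; linarith
    rw [norm_div]
    calc ‖z‖ / ‖((k : ℂ) + 1)‖ ≤ ‖z‖ / 1 :=
          div_le_div_of_nonneg_left (norm_nonneg z) one_pos h1
      _ < 1 := by simpa using hz
  have hf : HasSum (fun n : ℕ =>
      ((-1) ^ (n + 2) / ((n : ℂ) + 2)) * riemannZeta ((n : ℂ) + 2) * z ^ (n + 2)) S := by
    refine hGs.prod_fiberwise fun n => ?_
    have h := (zeta_step n).mul_left (((-1 : ℂ)) ^ (n + 2) / ((n : ℂ) + 2) * z ^ (n + 2))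
    have h2 : HasSum (fun k : ℕ => ((-1) ^ (n + 2) / ((n : ℂ) + 2)) * (z / ((k : ℂ) + 1)) ^ (n + 2))
        ((((-1 : ℂ)) ^ (n + 2) / ((n : ℂ) + 2) * z ^ (n + 2)) * riemannZeta ((n : ℂ) + 2)) :=
      h.congr_fun fun k => by rw [div_pow]; ring
    have hval : (((-1 : ℂ)) ^ (n + 2) / ((n : ℂ) + 2) * z ^ (n + 2)) * riemannZeta ((n : ℂ) + 2)
        = ((-1) ^ (n + 2) / ((n : ℂ) + 2)) * riemannZeta ((n : ℂ) + 2) * z ^ (n + 2) := by ring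
    rwa [hval] at h2
  have hu : HasSum (fun k : ℕ => z / ((k : ℂ) + 1) - Complex.log (1 + z / ((k : ℂ) + 1))) S := by
    have hswap : HasSum (fun p : ℕ × ℕ =>
        ((-1) ^ (p.2 + 2) / ((p.2 : ℂ) + 2)) * (z / ((p.1 : ℂ) + 1)) ^ (p.2 + 2)) S :=
      ((Equiv.hasSum_iff (Equiv.prodComm ℕ ℕ)).mpr hGs).congr_fun fun p => rfl
    refine hswap.prod_fiberwise fun k => ?_
    exact (taylor_step (hwlt k)).congr_fun fun n => by norm_num
  refine ⟨S, hf, ?_⟩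
  have h1 : Tendsto (fun N : ℕ => Complex.exp (-(Real.eulerMascheroniConstant : ℂ) * z +
      ∑ k ∈ range N, (z / ((k : ℂ) + 1) - Complex.log (1 + z / ((k : ℂ) + 1))))) atTop
      (𝓝 (Complex.exp (-(Real.eulerMascheroniConstant : ℂ) * z + S))) :=
    (Complex.continuous_exp.tendsto _).comp (tendsto_const_nhds.add hu.tendsto_sum_nat)
  have h2 : Tendsto (fun N : ℕ => Complex.exp (-(Real.eulerMascheroniConstant : ℂ) * z +
      ∑ k ∈ range N, (z / ((k : ℂ) + 1) - Complex.log (1 + z / ((k : ℂ) + 1))))) atTop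
      (𝓝 (Complex.Gamma (z + 1))) := by
    have hV := (Complex.GammaSeq_tendsto_Gamma (z + 1)).mul (lim_part z)
    rw [mul_one] at hV
    refine hV.congr' ?_
    filter_upwards [eventually_ge_atTop 1] with N hN
    exact (key_alg hz hN).symm
  exact tendsto_nhds_unique h1 h2
end

section
/- The Gauss multiplication formula: for every n ≥ 1 and every z ∈ ℂ with z+1, (z+1)/n, (z+2)/n, …, (z+n)/n all avoiding the non-positive integers, (2π)^{(n−1)/2} · Γ(z+1) = n^{z+1/2} · ∏_{l=1}^{n} Γ((z+l)/n). -/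
open Real Filter Topology
open scoped Nat

private lemma gauss_cpow_ne_zero {x : ℂ} (hx : x ≠ 0) (y : ℂ) : x ^ y ≠ 0 := by
  rw [Complex.cpow_def_of_ne_zero hx]; exact Complex.exp_ne_zero _

private lemma gauss_cpow_sum {x : ℂ} (hx : x ≠ 0) {α : Type*} (s : Finset α) (f : α → ℂ) :
    x ^ (∑ a ∈ s, f a) = ∏ a ∈ s, x ^ f a := by
  classical
  induction s using Finset.cons_induction with
  | empty => simp
  | cons a s ha ih => rw [Finset.sum_cons, Finset.prod_cons, Complex.cpow_add _ _ hx, ih]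

private lemma gauss_sum_aux (n : ℕ) : ∑ i ∈ Finset.range n, ((i : ℂ) + 1) = n * (n + 1) / 2 := by
  induction n with
  | zero => simp
  | succ k ih => rw [Finset.sum_range_succ, ih]; push_cast; ring

private lemma gauss_prod_factors (n : ℕ) (hn : 1 ≤ n) (z : ℂ) (M : ℕ) :
    (n : ℂ) ^ (n * M) *
      ∏ j ∈ Finset.range M, ∏ i ∈ Finset.range n, ((z + ((i : ℂ) + 1)) / n + j) =
    ∏ k ∈ Finset.range (n * M), (z + 1 + k) := by
  have hn0 : (n : ℂ) ≠ 0 := Nat.cast_ne_zero.mpr (by omega)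
  induction M with
  | zero => simp
  | succ M ih =>
    have hsplit : ∏ k ∈ Finset.range (n * (M + 1)), (z + 1 + (k : ℂ)) =
        (∏ k ∈ Finset.range (n * M), (z + 1 + (k : ℂ))) *
          ∏ i ∈ Finset.range n, (z + 1 + ((n * M + i : ℕ) : ℂ)) := by
      rw [Nat.mul_succ, Finset.prod_range_add]
    rw [hsplit, ← ih, Finset.prod_range_succ, Nat.mul_succ, pow_add, mul_mul_mul_comm]
    congr 1
    have hconst : (n : ℂ) ^ n = ∏ _i ∈ Finset.range n, (n : ℂ) := by
      rw [Finset.prod_const, Finset.card_range]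
    rw [hconst, ← Finset.prod_mul_distrib]
    refine Finset.prod_congr rfl fun i _ => ?_
    push_cast
    field_simp
    ring

private lemma gauss_D_ne_zero (z : ℂ) (h1 : ∀ m : ℕ, z + 1 ≠ -(m : ℂ)) (M : ℕ) :
    ∏ k ∈ Finset.range M, (z + 1 + k) ≠ 0 := by
  rw [Finset.prod_ne_zero_iff]
  intro k _ h
  exact h1 k (eq_neg_of_add_eq_zero_left h)

private lemma gauss_seq_prod (n : ℕ) (hn : 1 ≤ n) (z : ℂ) {m : ℕ} (hm : 1 ≤ m) :
    ∏ i ∈ Finset.range n, Complex.GammaSeq ((z + ((i : ℂ) + 1)) / n) m =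
      (m : ℂ) ^ (z + ((n : ℂ) + 1) / 2) * ((m ! : ℕ) : ℂ) ^ n /
        ∏ j ∈ Finset.range (m + 1), ∏ i ∈ Finset.range n, ((z + ((i : ℂ) + 1)) / n + j) := by
  have hm0 : (m : ℂ) ≠ 0 := Nat.cast_ne_zero.mpr (by omega)
  have hn0 : (n : ℂ) ≠ 0 := Nat.cast_ne_zero.mpr (by omega)
  have hsum : ∑ i ∈ Finset.range n, (z + ((i : ℂ) + 1)) / n = z + ((n : ℂ) + 1) / 2 := by
    rw [← Finset.sum_div, Finset.sum_add_distrib, Finset.sum_const, Finset.card_range,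
      gauss_sum_aux]
    field_simp
    ring
  simp only [Complex.GammaSeq]
  rw [Finset.prod_div_distrib, Finset.prod_mul_distrib, Finset.prod_const, Finset.card_range,
    ← gauss_cpow_sum hm0, hsum, Finset.prod_comm]

private noncomputable def gaussC (n m : ℕ) : ℂ :=
  (m : ℂ) ^ ((1 - (n : ℂ)) / 2) * (((n * (m + 1) - 1)! : ℕ) : ℂ) /
    (((m ! : ℕ) : ℂ) ^ n * (n : ℂ) ^ (n * (m + 1)))

private lemma gauss_q_eq (n : ℕ) (hn : 1 ≤ n) (z : ℂ) (h1 : ∀ m : ℕ, z + 1 ≠ -(m : ℂ))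
    {m : ℕ} (hm : 1 ≤ m) :
    Complex.GammaSeq (z + 1) (n * (m + 1) - 1) /
        ∏ i ∈ Finset.range n, Complex.GammaSeq ((z + ((i : ℂ) + 1)) / n) m =
      ((((n * (m + 1) - 1 : ℕ) : ℝ) / (m : ℝ) : ℝ) : ℂ) ^ (z + 1) * gaussC n m := by
  have hm0 : (m : ℂ) ≠ 0 := Nat.cast_ne_zero.mpr (by omega)
  have hn0 : (n : ℂ) ≠ 0 := Nat.cast_ne_zero.mpr (by omega)
  have hnm : 1 ≤ n * (m + 1) := Nat.one_le_iff_ne_zero.mpr (by positivity)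
  have hN1 : n * (m + 1) - 1 + 1 = n * (m + 1) := by omega
  have hD : ∏ k ∈ Finset.range (n * (m + 1)), (z + 1 + k) ≠ 0 := gauss_D_ne_zero z h1 _
  have e3 : (n : ℂ) ^ (n * (m + 1)) ≠ 0 := pow_ne_zero _ hn0
  have hPP : ∏ j ∈ Finset.range (m + 1), ∏ i ∈ Finset.range n, ((z + ((i : ℂ) + 1)) / n + j) =
      (∏ k ∈ Finset.range (n * (m + 1)), (z + 1 + k)) / (n : ℂ) ^ (n * (m + 1)) := by
    rw [eq_div_iff e3, mul_comm]
    exact gauss_prod_factors n hn z (m + 1)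
  rw [Complex.GammaSeq, gauss_seq_prod n hn z hm, hPP, hN1]
  have hNsplit : (((n * (m + 1) - 1 : ℕ)) : ℂ) ^ (z + 1) =
      ((((n * (m + 1) - 1 : ℕ) : ℝ) / (m : ℝ) : ℝ) : ℂ) ^ (z + 1) * ((m : ℂ)) ^ (z + 1) := by
    have h1' : (((n * (m + 1) - 1 : ℕ)) : ℝ) =
        (((n * (m + 1) - 1 : ℕ) : ℝ) / (m : ℝ)) * (m : ℝ) := by
      field_simp
    have hmc := Complex.mul_cpow_ofReal_nonneg
      (by positivity : (0:ℝ) ≤ ((n * (m + 1) - 1 : ℕ) : ℝ) / (m : ℝ))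
      (by positivity : (0:ℝ) ≤ (m:ℝ)) (z + 1)
    rw [← Complex.ofReal_mul, ← h1'] at hmc
    push_cast at hmc ⊢
    exact hmc
  have hmsplit : (m : ℂ) ^ (z + 1) =
      (m : ℂ) ^ (z + ((n : ℂ) + 1) / 2) * (m : ℂ) ^ ((1 - (n : ℂ)) / 2) := by
    rw [← Complex.cpow_add _ _ hm0]
    congr 1
    ring
  rw [hNsplit, hmsplit, gaussC]
  have e1 : (m : ℂ) ^ (z + ((n : ℂ) + 1) / 2) ≠ 0 := gauss_cpow_ne_zero hm0 _
  have e2 : ((m ! : ℕ) : ℂ) ^ n ≠ 0 :=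
    pow_ne_zero _ (Nat.cast_ne_zero.mpr (Nat.factorial_ne_zero m))
  set B := ((((n * (m + 1) - 1 : ℕ) : ℝ) / (m : ℝ) : ℝ) : ℂ) ^ (z + 1) with hB
  set M1 := (m : ℂ) ^ (z + ((n : ℂ) + 1) / 2) with hM1
  set M2 := (m : ℂ) ^ ((1 - (n : ℂ)) / 2) with hM2
  field_simp

private lemma gauss_index_tendsto (n : ℕ) (hn : 1 ≤ n) :
    Tendsto (fun m : ℕ => n * (m + 1) - 1) atTop atTop := by
  refine tendsto_atTop_mono (f := id) (fun m => ?_) tendsto_id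
  show m ≤ n * (m + 1) - 1
  have := Nat.mul_le_mul_right (m + 1) hn
  omega

private lemma gauss_base_tendsto (n : ℕ) (hn : 1 ≤ n) (w : ℂ) :
    Tendsto (fun m : ℕ => ((((n * (m + 1) - 1 : ℕ) : ℝ) / (m : ℝ) : ℝ) : ℂ) ^ w) atTop
      (𝓝 ((n : ℂ) ^ w)) := by
  have hreal : Tendsto (fun m : ℕ => (((n * (m + 1) - 1 : ℕ) : ℝ) / (m : ℝ))) atTop
      (𝓝 (n : ℝ)) := by
    have h2 : Tendsto (fun m : ℕ => (n : ℝ) + ((n : ℝ) - 1) / (m : ℝ)) atTop (𝓝 (n : ℝ)) := by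
      have hd := (tendsto_const_nhds (x := ((n : ℝ) - 1)) (f := atTop (α := ℕ))).div_atTop
        tendsto_natCast_atTop_atTop
      simpa using (tendsto_const_nhds (x := (n : ℝ)) (f := atTop (α := ℕ))).add hd
    refine h2.congr' ?_
    filter_upwards [eventually_ge_atTop 1] with m hm
    have hnm : 1 ≤ n * (m + 1) := Nat.one_le_iff_ne_zero.mpr (by positivity)
    have hm0 : (m : ℝ) ≠ 0 := Nat.cast_ne_zero.mpr (by omega)
    rw [Nat.cast_sub hnm]
    push_cast
    field_simp
    ring
  have hcont : ContinuousAt (fun a : ℝ => (a : ℂ) ^ w) (n : ℝ) :=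
    Complex.continuousAt_ofReal_cpow_const _ _ (Or.inr (by positivity))
  exact hcont.tendsto.comp hreal

private lemma gauss_key (n : ℕ) (hn : 1 ≤ n) (z : ℂ) (h1 : ∀ m : ℕ, z + 1 ≠ -(m : ℂ))
    (h2 : ∀ i ∈ Finset.range n, ∀ m : ℕ, (z + ((i : ℂ) + 1)) / n ≠ -(m : ℂ)) :
    Tendsto (gaussC n) atTop
      (𝓝 (Complex.Gamma (z + 1) /
        ((n : ℂ) ^ (z + 1) * ∏ i ∈ Finset.range n, Complex.Gamma ((z + ((i : ℂ) + 1)) / n)))) := by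
  have hprodne : (∏ i ∈ Finset.range n, Complex.Gamma ((z + ((i : ℂ) + 1)) / n)) ≠ 0 := by
    rw [Finset.prod_ne_zero_iff]
    exact fun i hi => Complex.Gamma_ne_zero (h2 i hi)
  have hnum : Tendsto (fun m : ℕ => Complex.GammaSeq (z + 1) (n * (m + 1) - 1)) atTop
      (𝓝 (Complex.Gamma (z + 1))) :=
    (Complex.GammaSeq_tendsto_Gamma (z + 1)).comp (gauss_index_tendsto n hn)
  have hden : Tendsto (fun m : ℕ => ∏ i ∈ Finset.range n,
      Complex.GammaSeq ((z + ((i : ℂ) + 1)) / n) m) atTop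
      (𝓝 (∏ i ∈ Finset.range n, Complex.Gamma ((z + ((i : ℂ) + 1)) / n))) :=
    tendsto_finset_prod _ fun i _ => Complex.GammaSeq_tendsto_Gamma _
  have hq := hnum.div hden hprodne
  have hbase := gauss_base_tendsto n hn (z + 1)
  have hbasene : (n : ℂ) ^ (z + 1) ≠ 0 :=
    gauss_cpow_ne_zero (Nat.cast_ne_zero.mpr (by omega)) _
  have hc := hq.div hbase hbasene
  have heq : ∀ᶠ m : ℕ in atTop, (Complex.GammaSeq (z + 1) (n * (m + 1) - 1) /
      ∏ i ∈ Finset.range n, Complex.GammaSeq ((z + ((i : ℂ) + 1)) / n) m) /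
      ((((n * (m + 1) - 1 : ℕ) : ℝ) / (m : ℝ) : ℝ) : ℂ) ^ (z + 1) = gaussC n m := by
    filter_upwards [eventually_ge_atTop 1] with m hm
    have hnm : 2 ≤ n * (m + 1) :=
      le_trans (by omega) (Nat.mul_le_mul_right (m + 1) hn)
    have hpos : (0 : ℝ) < ((n * (m + 1) - 1 : ℕ) : ℝ) / (m : ℝ) := by
      apply div_pos
      · exact_mod_cast Nat.cast_pos.mpr (by omega : 0 < n * (m + 1) - 1)
      · exact_mod_cast Nat.cast_pos.mpr (by omega : 0 < m)
    have hbne : ((((n * (m + 1) - 1 : ℕ) : ℝ) / (m : ℝ) : ℝ) : ℂ) ≠ 0 :=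
      Complex.ofReal_ne_zero.mpr (ne_of_gt hpos)
    rw [gauss_q_eq n hn z h1 hm, mul_div_cancel_left₀ _ (gauss_cpow_ne_zero hbne _)]
  have hfin := hc.congr' heq
  rw [div_div] at hfin
  rwa [mul_comm ((n : ℂ) ^ (z + 1))]

/-- The finite sine product `∏_{i=1}^{k} sin (π i/(k+1)) = (k+1)/2^k`. -/
private lemma gauss_sin_prod (k : ℕ) :
    ∏ i ∈ Finset.range k, Real.sin (π * (i + 1) / (k + 1)) = (k + 1) / 2 ^ k := by
  have hk0 : ((k : ℝ) + 1) ≠ 0 := by positivity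
  have hpr := Complex.isPrimitiveRoot_exp (k + 1) (Nat.succ_ne_zero k)
  have key := hpr.prod_one_sub_pow_eq_order
  push_cast at key
  have hfac : ∀ i : ℕ, 1 - Complex.exp (2 * π * Complex.I / (k + 1)) ^ (i + 1) =
      -Complex.exp (((π * (i + 1) / (k + 1) : ℝ) : ℂ) * Complex.I) *
        (2 * Complex.I * ((Real.sin (π * (i + 1) / (k + 1)) : ℝ) : ℂ)) := by
    intro i
    set a : ℝ := π * (i + 1) / (k + 1) with ha
    have hpow : Complex.exp (2 * π * Complex.I / (k + 1)) ^ (i + 1) =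
        Complex.exp ((a : ℂ) * Complex.I + (a : ℂ) * Complex.I) := by
      rw [← Complex.exp_nat_mul]
      congr 1
      have hkc : ((k : ℂ) + 1) ≠ 0 := by exact_mod_cast (Complex.ofReal_ne_zero.mpr hk0)
      push_cast [ha]
      field_simp
      ring
    rw [hpow, Complex.exp_add]
    have hsin : ((Real.sin a : ℝ) : ℂ) = Complex.sin (a : ℂ) := Complex.ofReal_sin a
    rw [hsin, Complex.sin]
    have h1 : Complex.exp ((a : ℂ) * Complex.I) * Complex.exp (-(a : ℂ) * Complex.I) = 1 := by
      rw [← Complex.exp_add, show ((a : ℂ) * Complex.I + -(a : ℂ) * Complex.I) = 0 by ring,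
        Complex.exp_zero]
    calc 1 - Complex.exp ((a : ℂ) * Complex.I) * Complex.exp ((a : ℂ) * Complex.I)
        = Complex.exp ((a : ℂ) * Complex.I) * Complex.exp (-(a : ℂ) * Complex.I) -
            Complex.exp ((a : ℂ) * Complex.I) * Complex.exp ((a : ℂ) * Complex.I) := by rw [h1]
      _ = -Complex.exp ((a : ℂ) * Complex.I) *
            (2 * Complex.I * ((Complex.exp (-(a : ℂ) * Complex.I) -
              Complex.exp ((a : ℂ) * Complex.I)) * Complex.I / 2)) := by
          linear_combination (Complex.exp ((a : ℂ) * Complex.I) *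
            (Complex.exp (-(a : ℂ) * Complex.I) - Complex.exp ((a : ℂ) * Complex.I))) *
              Complex.I_sq
  have key2 : ∏ i ∈ Finset.range k,
      (-Complex.exp (((π * (i + 1) / (k + 1) : ℝ) : ℂ) * Complex.I) *
        (2 * Complex.I * ((Real.sin (π * (i + 1) / (k + 1)) : ℝ) : ℂ))) = (k : ℂ) + 1 := by
    rw [← key]
    exact Finset.prod_congr rfl fun i _ => (hfac i).symm
  have hsin_nonneg : ∀ i ∈ Finset.range k, 0 ≤ Real.sin (π * (i + 1) / (k + 1)) := by
    intro i hi
    apply Real.sin_nonneg_of_nonneg_of_le_pi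
    · positivity
    · rw [div_le_iff₀ (by positivity)]
      have hik : (i : ℝ) + 1 ≤ (k : ℝ) + 1 := by
        have := Finset.mem_range.mp hi
        push_cast
        have : (i : ℝ) < k := by exact_mod_cast this
        linarith
      nlinarith [Real.pi_pos]
  have habs := congrArg (fun x : ℂ => ‖x‖) key2
  rw [norm_prod] at habs
  have habs2 : ∏ i ∈ Finset.range k, (2 * Real.sin (π * (i + 1) / (k + 1))) = (k : ℝ) + 1 := by
    have hr : ((k : ℂ) + 1) = (((k : ℝ) + 1 : ℝ) : ℂ) := by push_cast; ring
    rw [hr, Complex.norm_real, Real.norm_eq_abs, abs_of_nonneg (by positivity)] at habs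
    have hterm : ∀ i ∈ Finset.range k, (2 : ℝ) * Real.sin (π * (i + 1) / (k + 1)) =
        ‖(-Complex.exp (((π * (i + 1) / (k + 1) : ℝ) : ℂ) * Complex.I) *
          (2 * Complex.I * ((Real.sin (π * (i + 1) / (k + 1)) : ℝ) : ℂ)))‖ := by
      intro i hi
      rw [show -Complex.exp (((π * (i + 1) / (k + 1) : ℝ) : ℂ) * Complex.I) *
          (2 * Complex.I * ((Real.sin (π * (i + 1) / (k + 1)) : ℝ) : ℂ)) =
          -(Complex.exp (((π * (i + 1) / (k + 1) : ℝ) : ℂ) * Complex.I) *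
            (2 * Complex.I * ((Real.sin (π * (i + 1) / (k + 1)) : ℝ) : ℂ))) by ring]
      rw [norm_neg, norm_mul, Complex.norm_exp_ofReal_mul_I, one_mul, norm_mul, norm_mul,
        Complex.norm_I, Complex.norm_two, Complex.norm_real, Real.norm_eq_abs,
        abs_of_nonneg (hsin_nonneg i hi)]
      ring
    rw [Finset.prod_congr rfl hterm, habs]
  rw [Finset.prod_mul_distrib, Finset.prod_const, Finset.card_range] at habs2
  rw [eq_div_iff (by positivity : ((2 : ℝ) ^ k) ≠ 0)]
  rw [mul_comm] at habs2
  push_cast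
  linarith [habs2]

private lemma gauss_gamma_prod (k : ℕ) :
    ∏ i ∈ Finset.range (k + 1), Real.Gamma (((i : ℝ) + 1) / ((k : ℝ) + 1)) =
      (2 * π) ^ ((k : ℝ) / 2) / Real.sqrt ((k : ℝ) + 1) := by
  have hπ : (0 : ℝ) < 2 * π := by positivity
  have hP : ∏ i ∈ Finset.range (k + 1), Real.Gamma (((i : ℝ) + 1) / ((k : ℝ) + 1)) =
      ∏ i ∈ Finset.range k, Real.Gamma (((i : ℝ) + 1) / ((k : ℝ) + 1)) := by
    rw [Finset.prod_range_succ, show (((k : ℝ)) + 1) / ((k : ℝ) + 1) = 1 by field_simp,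
      Real.Gamma_one, mul_one]
  set P := ∏ i ∈ Finset.range k, Real.Gamma (((i : ℝ) + 1) / ((k : ℝ) + 1)) with hPdef
  have hpos : 0 < P := Finset.prod_pos fun i _ => Real.Gamma_pos_of_pos (by positivity)
  have hrefl : P = ∏ i ∈ Finset.range k, Real.Gamma (1 - ((i : ℝ) + 1) / ((k : ℝ) + 1)) := by
    rw [hPdef, ← Finset.prod_range_reflect (fun j => Real.Gamma (((j : ℝ) + 1) / ((k : ℝ) + 1))) k]
    refine Finset.prod_congr rfl fun j hj => ?_
    have hjk : j < k := Finset.mem_range.mp hj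
    have hcast : ((k - 1 - j : ℕ) : ℝ) = (k : ℝ) - 1 - j := by
      have h' : k - 1 - j = k - (1 + j) := by omega
      rw [h', Nat.cast_sub (by omega)]
      push_cast; ring
    simp only [hcast]
    congr 1
    field_simp
    ring
  have hsq : P ^ 2 = (2 * π) ^ k / ((k : ℝ) + 1) := by
    have h1 : P ^ 2 = ∏ i ∈ Finset.range k,
        (Real.Gamma (((i : ℝ) + 1) / ((k : ℝ) + 1)) *
          Real.Gamma (1 - ((i : ℝ) + 1) / ((k : ℝ) + 1))) := by
      rw [Finset.prod_mul_distrib, ← hPdef, ← hrefl, sq]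
    rw [h1, Finset.prod_congr rfl
      (fun i (_ : i ∈ Finset.range k) => Real.Gamma_mul_Gamma_one_sub (((i : ℝ) + 1) / ((k : ℝ) + 1))),
      Finset.prod_div_distrib, Finset.prod_const, Finset.card_range]
    have h3 : ∏ i ∈ Finset.range k, Real.sin (π * (((i : ℝ) + 1) / ((k : ℝ) + 1))) =
        ((k : ℝ) + 1) / 2 ^ k := by
      rw [← gauss_sin_prod k]
      exact Finset.prod_congr rfl fun i _ => by rw [mul_div_assoc]
    rw [h3]
    have hk1 : ((k : ℝ) + 1) ≠ 0 := by positivity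
    field_simp
    ring
  rw [hP]
  have hPsqrt : P = Real.sqrt ((2 * π) ^ k / ((k : ℝ) + 1)) := by
    rw [← hsq, Real.sqrt_sq hpos.le]
  rw [hPsqrt, Real.sqrt_div (by positivity) _]
  congr 1
  rw [← Real.rpow_natCast (2 * π) k, Real.sqrt_eq_rpow, ← Real.rpow_mul hπ.le, mul_one_div]

theorem stmt_17 (n : ℕ) (hn : 1 ≤ n) (z : ℂ)
    (h1 : ∀ m : ℕ, z + 1 ≠ -(m : ℂ))
    (h2 : ∀ l ∈ Finset.Icc 1 n, ∀ m : ℕ, (z + l) / n ≠ -(m : ℂ)) :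
    (2 * (π : ℂ)) ^ (((n : ℂ) - 1) / 2) * Complex.Gamma (z + 1) =
      (n : ℂ) ^ (z + 1 / 2) * ∏ l ∈ Finset.Icc 1 n, Complex.Gamma ((z + l) / n) := by
  have hn0 : (n : ℂ) ≠ 0 := Nat.cast_ne_zero.mpr (by omega)
  have hIcc : ∏ l ∈ Finset.Icc 1 n, Complex.Gamma ((z + l) / n) =
      ∏ i ∈ Finset.range n, Complex.Gamma ((z + ((i : ℂ) + 1)) / n) := by
    rw [← Finset.Ico_add_one_right_eq_Icc, Finset.prod_Ico_eq_prod_range]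
    refine Finset.prod_congr rfl fun i _ => ?_
    congr 2
    push_cast
    ring
  have h2' : ∀ i ∈ Finset.range n, ∀ m : ℕ, (z + ((i : ℂ) + 1)) / n ≠ -(m : ℂ) := by
    intro i hi m
    have hmem : i + 1 ∈ Finset.Icc 1 n := by
      rw [Finset.mem_Icc]
      exact ⟨by omega, by have := Finset.mem_range.mp hi; omega⟩
    have hh := h2 (i + 1) hmem m
    push_cast at hh
    exact hh
  have h1₀ : ∀ m : ℕ, (0 : ℂ) + 1 ≠ -(m : ℂ) := by
    intro m h
    rw [zero_add] at h
    have hre := congrArg Complex.re h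
    simp only [Complex.one_re, Complex.neg_re, Complex.natCast_re] at hre
    have hm : (0 : ℝ) ≤ (m : ℝ) := Nat.cast_nonneg m
    linarith
  have h2₀ : ∀ i ∈ Finset.range n, ∀ m : ℕ, ((0 : ℂ) + ((i : ℂ) + 1)) / n ≠ -(m : ℂ) := by
    intro i hi m h
    rw [show ((0 : ℂ) + ((i : ℂ) + 1)) / n = ((((i : ℝ) + 1) / (n : ℝ) : ℝ) : ℂ) by
        push_cast; ring,
      show -(m : ℂ) = ((-(m : ℝ) : ℝ) : ℂ) by push_cast; ring] at h
    have heq := Complex.ofReal_inj.mp h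
    have hnR : (0 : ℝ) < (n : ℝ) := by exact_mod_cast (by omega : 0 < n)
    have hpos : 0 < ((i : ℝ) + 1) / (n : ℝ) := by positivity
    have hm : (0 : ℝ) ≤ (m : ℝ) := Nat.cast_nonneg m
    rw [heq] at hpos
    linarith
  have key_z := gauss_key n hn z h1 h2'
  have key_0 := gauss_key n hn 0 h1₀ h2₀
  have huniq := tendsto_nhds_unique key_z key_0
  simp only [zero_add] at huniq
  rw [Complex.Gamma_one, Complex.cpow_one] at huniq
  have hΓ0 : ∏ i ∈ Finset.range n, Complex.Gamma (((i : ℂ) + 1) / n) =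
      (((2 * π) ^ (((n : ℝ) - 1) / 2) / Real.sqrt n : ℝ) : ℂ) := by
    obtain ⟨k, rfl⟩ : ∃ k, n = k + 1 := ⟨n - 1, by omega⟩
    have hterm : ∀ i ∈ Finset.range (k + 1),
        Complex.Gamma (((i : ℂ) + 1) / ((k + 1 : ℕ) : ℂ)) =
          ((Real.Gamma (((i : ℝ) + 1) / ((k : ℝ) + 1)) : ℝ) : ℂ) := by
      intro i _
      rw [show ((i : ℂ) + 1) / ((k + 1 : ℕ) : ℂ) =
          (((((i : ℝ) + 1) / ((k : ℝ) + 1)) : ℝ) : ℂ) by push_cast; ring]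
      exact Complex.Gamma_ofReal _
    rw [Finset.prod_congr rfl hterm, ← Complex.ofReal_prod, gauss_gamma_prod k]
    congr 2
    · push_cast; ring
    · push_cast; ring
  rw [hΓ0] at huniq
  set C₀ : ℂ := (((2 * π) ^ (((n : ℝ) - 1) / 2) / Real.sqrt n : ℝ) : ℂ) with hC₀def
  have hsqrtpos : (0 : ℝ) < Real.sqrt n := Real.sqrt_pos.mpr (by exact_mod_cast (by omega : 0 < n))
  have hC0pos : (0 : ℝ) < (2 * π) ^ (((n : ℝ) - 1) / 2) / Real.sqrt n := by positivity
  have hC0 : C₀ ≠ 0 := Complex.ofReal_ne_zero.mpr (ne_of_gt hC0pos)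
  have hGz : ∏ i ∈ Finset.range n, Complex.Gamma ((z + ((i : ℂ) + 1)) / n) ≠ 0 :=
    Finset.prod_ne_zero_iff.mpr fun i hi => Complex.Gamma_ne_zero (h2' i hi)
  have hnz1 : (n : ℂ) ^ (z + 1) ≠ 0 := gauss_cpow_ne_zero hn0 _
  have hstar := (div_eq_div_iff (mul_ne_zero hnz1 hGz) (mul_ne_zero hn0 hC0)).mp huniq
  rw [one_mul] at hstar
  rw [hIcc]
  have hhalf : (n : ℂ) ^ (1 / 2 : ℂ) * (n : ℂ) ^ (1 / 2 : ℂ) = n := by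
    rw [← Complex.cpow_add _ _ hn0]
    norm_num
  have hz1 : (n : ℂ) ^ (z + 1) = (n : ℂ) ^ (z + 1 / 2) * (n : ℂ) ^ (1 / 2 : ℂ) := by
    rw [← Complex.cpow_add _ _ hn0]
    congr 1
    ring
  have hs : (n : ℂ) ^ (1 / 2 : ℂ) = ((Real.sqrt n : ℝ) : ℂ) := by
    rw [Real.sqrt_eq_rpow, Complex.ofReal_cpow (Nat.cast_nonneg n)]
    norm_num
  have h2π : (2 * (π : ℂ)) ^ (((n : ℂ) - 1) / 2) =
      (((2 * π) ^ (((n : ℝ) - 1) / 2) : ℝ) : ℂ) := by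
    rw [show ((n : ℂ) - 1) / 2 = (((((n : ℝ) - 1) / 2) : ℝ) : ℂ) by push_cast; ring,
      show 2 * (π : ℂ) = ((2 * π : ℝ) : ℂ) by push_cast; ring,
      ← Complex.ofReal_cpow (by positivity)]
  have hkey : (2 * (π : ℂ)) ^ (((n : ℂ) - 1) / 2) = (n : ℂ) ^ (1 / 2 : ℂ) * C₀ := by
    rw [h2π, hs, hC₀def, ← Complex.ofReal_mul]
    congr 1
    field_simp
  apply mul_right_cancel₀ (mul_ne_zero hn0 hC0)
  calc (2 * (π : ℂ)) ^ (((n : ℂ) - 1) / 2) * Complex.Gamma (z + 1) * ((n : ℂ) * C₀)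
      = (2 * (π : ℂ)) ^ (((n : ℂ) - 1) / 2) * (Complex.Gamma (z + 1) * ((n : ℂ) * C₀)) := by
        ring
    _ = ((n : ℂ) ^ (1 / 2 : ℂ) * C₀) * ((n : ℂ) ^ (z + 1 / 2) * (n : ℂ) ^ (1 / 2 : ℂ) *
          ∏ i ∈ Finset.range n, Complex.Gamma ((z + ((i : ℂ) + 1)) / n)) := by
        rw [hstar, hkey, hz1]
    _ = (n : ℂ) ^ (z + 1 / 2) * (∏ i ∈ Finset.range n, Complex.Gamma ((z + ((i : ℂ) + 1)) / n)) *
          (((n : ℂ) ^ (1 / 2 : ℂ) * (n : ℂ) ^ (1 / 2 : ℂ)) * C₀) := by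
        ring
    _ = (n : ℂ) ^ (z + 1 / 2) * (∏ i ∈ Finset.range n, Complex.Gamma ((z + ((i : ℂ) + 1)) / n)) *
          ((n : ℂ) * C₀) := by
        rw [hhalf]
end
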